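/- For every N > 0 there is a constant c_N > 0 such that for all r with 0 < r ≤ N and all x' ∈ ℝ one has (x' - U'(r))² + V'(r)² ≥ c_N · ( r² + (x' + ρ)² ). In other words, the squared distance from the real point x' to the point U'(r) + iV'(r) is bounded below by c_N times r² plus the squared distance from x' to -ρ. -/

import Mathlib

open Complex

-- re/im of a complex power with real exponent
lemma cpow_re_im (z : ℂ) (hz : z ≠ 0) (c : ℝ) :
    (z ^ (c : ℂ)).re = ‖z‖ ^ c * Real.cos (c * arg z) ∧
    (z ^ (c : ℂ)).im = ‖z‖ ^ c * Real.sin (c * arg z) := by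
  rw [Complex.cpow_def_of_ne_zero hz]
  have habs : 0 < ‖z‖ := norm_pos_iff.mpr hz
  have h1 : (Complex.log z * (c : ℂ)).re = Real.log (‖z‖) * c := by
    simp [Complex.mul_re, Complex.log_re, Complex.log_im]
  have h2 : (Complex.log z * (c : ℂ)).im = arg z * c := by
    simp [Complex.mul_im, Complex.log_re, Complex.log_im]
  rw [Complex.exp_re, Complex.exp_im, h1, h2]
  rw [Real.rpow_def_of_pos habs]
  constructor <;> ring_nf

lemma arg_anti (z w : ℂ) (hz : z.im = 1) (hw : w.im = 1) (hre : z.re ≤ w.re) :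
    arg w ≤ arg z := by
  have hz0 : (0:ℝ) < z.im := by rw [hz]; norm_num
  have hw0 : (0:ℝ) < w.im := by rw [hw]; norm_num
  rw [Complex.arg_of_im_pos hz0, Complex.arg_of_im_pos hw0]
  have hza : 0 < ‖z‖ := by
    refine norm_pos_iff.mpr ?_; intro h; rw [h] at hz; simp at hz
  have hwa : 0 < ‖w‖ := by
    refine norm_pos_iff.mpr ?_; intro h; rw [h] at hw; simp at hw
  have hz2 : (‖z‖) ^ 2 = z.re ^ 2 + 1 := by
    rw [Complex.sq_norm, Complex.normSq_apply, hz]; ring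
  have hw2 : (‖w‖) ^ 2 = w.re ^ 2 + 1 := by
    rw [Complex.sq_norm, Complex.normSq_apply, hw]; ring
  have key : z.re / ‖z‖ ≤ w.re / ‖w‖ := by
    rw [div_le_div_iff₀ hza hwa]
    rcases le_or_gt 0 z.re with hzr | hzr
    · have hwr : 0 ≤ w.re := le_trans hzr hre
      have ha : 0 ≤ z.re * ‖w‖ := mul_nonneg hzr hwa.le
      have hb : 0 ≤ w.re * ‖z‖ := mul_nonneg hwr hza.le
      have hsq : (z.re * ‖w‖)^2 ≤ (w.re * ‖z‖)^2 := by
        nlinarith [mul_le_mul hre hre hzr hwr]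
      have := Real.sqrt_le_sqrt hsq
      rwa [Real.sqrt_sq ha, Real.sqrt_sq hb] at this
    · rcases le_or_gt 0 w.re with hwr | hwr
      · nlinarith
      · have ha : 0 ≤ -(w.re * ‖z‖) := by
          rw [neg_nonneg]; exact mul_nonpos_of_nonpos_of_nonneg hwr.le hza.le
        have hb : 0 ≤ -(z.re * ‖w‖) := by
          rw [neg_nonneg]; exact mul_nonpos_of_nonpos_of_nonneg hzr.le hwa.le
        have hsq : (-(w.re * ‖z‖))^2 ≤ (-(z.re * ‖w‖))^2 := by
          have : w.re * w.re ≤ z.re * z.re := by nlinarith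
          nlinarith
        have := Real.sqrt_le_sqrt hsq
        rw [Real.sqrt_sq ha, Real.sqrt_sq hb] at this
        linarith
  have h1 : z.re / ‖z‖ ∈ Set.Icc (-1:ℝ) 1 := by
    constructor
    · rw [le_div_iff₀ hza]
      have := neg_abs_le z.re
      have := Complex.abs_re_le_norm z
      nlinarith
    · rw [div_le_one hza]; exact le_trans (le_abs_self _) (Complex.abs_re_le_norm z)
  have h2 : w.re / ‖w‖ ∈ Set.Icc (-1:ℝ) 1 := by
    constructor
    · rw [le_div_iff₀ hwa]
      have := neg_abs_le w.re
      have := Complex.abs_re_le_norm w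
      nlinarith
    · rw [div_le_one hwa]; exact le_trans (le_abs_self _) (Complex.abs_re_le_norm w)
  exact Real.strictAntiOn_arccos.antitoneOn h1 h2 key

set_option maxHeartbeats 1000000 in
theorem stmt_2 (a b : ℝ) (hb : 0 < b)
    (ζs : ℂ) (hζs : ζs = -(a : ℂ) / (b : ℂ) + Complex.I)
    (γ : ℝ) (hγ : γ = Real.pi / Complex.arg ζs)
    (ρ : ℝ) (hρ : ρ = ‖ζs‖ ^ γ)
    (U' V' : ℝ → ℝ)
    (hU : ∀ r : ℝ, U' r = ((ζs + (r : ℂ)) ^ (γ : ℂ)).re)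
    (hV : ∀ r : ℝ, V' r = ((ζs + (r : ℂ)) ^ (γ : ℂ)).im) :
    ∀ N : ℝ, 0 < N → ∃ c : ℝ, 0 < c ∧
      ∀ r : ℝ, 0 < r → r ≤ N → ∀ x' : ℝ,
        (x' - U' r) ^ 2 + V' r ^ 2 ≥ c * (r ^ 2 + (x' + ρ) ^ 2) := by
  intro N hN
  -- basic facts about ζs
  have hcast : -(a:ℂ)/(b:ℂ) = ((-(a/b) : ℝ) : ℂ) := by push_cast; ring
  have him : ζs.im = 1 := by rw [hζs, hcast]; simp
  have hζne : ζs ≠ 0 := by intro h; rw [h] at him; simp at him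
  have himt : ∀ t : ℝ, (ζs + (t:ℂ)).im = 1 := by intro t; simp [him]
  have hnet : ∀ t : ℝ, ζs + (t:ℂ) ≠ 0 := by
    intro t h
    have := himt t; rw [h] at this; simp at this
  have hslit : ∀ t : ℝ, ζs + (t:ℂ) ∈ Complex.slitPlane := by
    intro t; rw [Complex.mem_slitPlane_iff]; right; rw [himt t]; norm_num
  have θpos : 0 < Complex.arg ζs := by
    rcases lt_or_eq_of_le (Complex.arg_nonneg_iff.mpr (by rw [him]; norm_num)) with h | h
    · exact h
    · exfalso
      have := Complex.arg_eq_zero_iff.mp h.symm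
      rw [him] at this; norm_num at this
  have θltπ : Complex.arg ζs < Real.pi := by
    rcases lt_or_eq_of_le (Complex.arg_le_pi ζs) with h | h
    · exact h
    · exfalso
      have := Complex.arg_eq_pi_iff.mp h
      rw [him] at this; norm_num at this
  have hγθ : γ * Complex.arg ζs = Real.pi := by
    rw [hγ]; field_simp
  have hγ1 : 1 < γ := by
    rw [hγ, lt_div_iff₀ θpos]; linarith
  -- arg bounds on the half-line
  have hargpos : ∀ t : ℝ, 0 < Complex.arg (ζs + (t:ℂ)) := by
    intro t
    rcases lt_or_eq_of_le (Complex.arg_nonneg_iff.mpr (by rw [himt t]; norm_num)) with h | h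
    · exact h
    · exfalso
      have := Complex.arg_eq_zero_iff.mp h.symm
      rw [himt t] at this; norm_num at this
  have hargle : ∀ t : ℝ, 0 ≤ t → Complex.arg (ζs + (t:ℂ)) ≤ Complex.arg ζs := by
    intro t ht
    apply arg_anti ζs _ him (himt t)
    simp [ht]
  -- the function and its derivative
  set F : ℝ → ℂ := fun t => (ζs + (t:ℂ)) ^ (γ:ℂ) with hFdef
  set G : ℝ → ℂ := fun t => (γ:ℂ) * (ζs + (t:ℂ)) ^ ((γ:ℂ) - 1) with hGdef
  have hUF : ∀ r : ℝ, U' r = (F r).re := by intro r; rw [hU r]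
  have hVF : ∀ r : ℝ, V' r = (F r).im := by intro r; rw [hV r]
  have hbase : ∀ t : ℝ, HasDerivAt (fun s : ℝ => ζs + (s:ℂ)) 1 t := by
    intro t
    have h0 := Complex.ofRealCLM.hasDerivAt (x := t)
    have h1 : HasDerivAt (fun s : ℝ => (s : ℂ)) 1 t := by simpa using (hasDerivAt_id t).ofReal_comp
    simpa using h1.const_add ζs
  have hF : ∀ t : ℝ, HasDerivAt F (G t) t := by
    intro t
    have hin : HasDerivAt (fun z : ℂ => ζs + z) 1 ((t:ℝ):ℂ) :=
      (hasDerivAt_id _).const_add ζs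
    have hg : HasDerivAt (fun z : ℂ => (ζs + z) ^ (γ:ℂ))
        ((γ:ℂ) * (ζs + ((t:ℝ):ℂ)) ^ ((γ:ℂ) - 1) * 1) ((t:ℝ):ℂ) :=
      HasDerivAt.cpow_const hin (hslit t)
    have h2 := hg.comp_ofReal
    simpa [hFdef, hGdef] using h2
  have hVd : ∀ t : ℝ, HasDerivAt (fun s => (F s).im) ((G t).im) t := by
    intro t
    exact (Complex.imCLM.hasFDerivAt.comp_hasDerivAt t (hF t))
  -- exponent rewriting
  have hexp : ((γ:ℂ) - 1) = ((γ - 1 : ℝ) : ℂ) := by push_cast; ring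
  -- positivity of the imaginary part of the derivative
  have hGim_pos : ∀ t ∈ Set.Icc (0:ℝ) N, 0 < (G t).im := by
    intro t ht
    have him' := (cpow_re_im (ζs + (t:ℂ)) (hnet t) (γ - 1)).2
    have heq : (G t).im = γ * ((ζs + (t:ℂ)) ^ ((γ - 1 : ℝ) : ℂ)).im := by
      simp only [hGdef]
      rw [hexp, Complex.im_ofReal_mul]
    rw [heq, him']
    have h1 : 0 < (γ - 1) * Complex.arg (ζs + (t:ℂ)) :=
      mul_pos (by linarith) (hargpos t)
    have h2 : (γ - 1) * Complex.arg (ζs + (t:ℂ)) < Real.pi := by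
      have hle : (γ - 1) * Complex.arg (ζs + (t:ℂ)) ≤ (γ - 1) * Complex.arg ζs :=
        mul_le_mul_of_nonneg_left (hargle t ht.1) (by linarith)
      have heq2 : (γ - 1) * Complex.arg ζs = Real.pi - Complex.arg ζs := by
        rw [sub_mul, one_mul, hγθ]
      linarith
    have hsin := Real.sin_pos_of_pos_of_lt_pi h1 h2
    have habs : 0 < ‖ζs + (t:ℂ)‖ ^ (γ - 1) :=
      Real.rpow_pos_of_pos (norm_pos_iff.mpr (hnet t)) _
    positivity
  -- continuity of G
  have hGcont : Continuous G := by
    rw [hGdef]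
    apply Continuous.mul continuous_const
    apply continuous_iff_continuousAt.mpr
    intro t
    have hc := ContinuousAt.comp (g := fun z : ℂ => z ^ ((γ:ℂ) - 1))
      (f := fun s : ℝ => ζs + (s:ℂ)) (x := t)
      (continuousAt_cpow_const (hslit t))
      ((by fun_prop : Continuous fun s : ℝ => ζs + (s:ℂ)).continuousAt)
    exact hc
  -- min of Im G and max of abs G on [0, N]
  obtain ⟨t₁, ht₁, hmin⟩ := isCompact_Icc.exists_isMinOn (Set.nonempty_Icc.mpr hN.le)
    ((Complex.continuous_im.comp hGcont).continuousOn (s := Set.Icc (0:ℝ) N))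
  obtain ⟨t₂, ht₂, hmax⟩ := isCompact_Icc.exists_isMaxOn (Set.nonempty_Icc.mpr hN.le)
    ((continuous_norm.comp hGcont).continuousOn (s := Set.Icc (0:ℝ) N))
  set m : ℝ := (G t₁).im with hmdef
  set M : ℝ := ‖G t₂‖ with hMdef
  have hm : 0 < m := hGim_pos t₁ ht₁
  have hM0 : 0 ≤ M := norm_nonneg _
  -- value at 0
  have hγarg : γ * Complex.arg (ζs + ((0:ℝ):ℂ)) = Real.pi := by
    simpa using hγθ
  have hF0re : (F 0).re = -ρ := by
    have h := (cpow_re_im (ζs + ((0:ℝ):ℂ)) (hnet 0) γ).1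
    have : (F 0).re = ((ζs + ((0:ℝ):ℂ)) ^ ((γ:ℝ):ℂ)).re := by simp [hFdef]
    rw [this, h, hγarg, Real.cos_pi, hρ]
    simp
  have hF0im : (F 0).im = 0 := by
    have h := (cpow_re_im (ζs + ((0:ℝ):ℂ)) (hnet 0) γ).2
    have : (F 0).im = ((ζs + ((0:ℝ):ℂ)) ^ ((γ:ℝ):ℂ)).im := by simp [hFdef]
    rw [this, h, hγarg, Real.sin_pi]
    simp
  -- lower bound for V'
  have hlow : ∀ r ∈ Set.Icc (0:ℝ) N, m * r ≤ (F r).im := by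
    intro r hr
    have key := (convex_Icc (0:ℝ) N).mul_sub_le_image_sub_of_le_deriv
      (f := fun t => (F t).im)
      (fun t _ => (hVd t).continuousAt.continuousWithinAt)
      (fun t _ => (hVd t).differentiableAt.differentiableWithinAt)
      (C := m)
      (fun t ht => by
        rw [(hVd t).deriv]
        exact isMinOn_iff.mp hmin t (interior_subset ht))
      0 (Set.left_mem_Icc.mpr hN.le) r hr hr.1
    have key' : m * (r - 0) ≤ (F r).im - (F 0).im := key
    rw [hF0im] at key'
    linarith
  -- upper bound for |F r - F 0|
  have hup : ∀ r ∈ Set.Icc (0:ℝ) N, ‖F r - F 0‖ ≤ M * r := by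
    intro r hr
    have key := (convex_Icc (0:ℝ) N).norm_image_sub_le_of_norm_hasDerivWithin_le
      (f := F) (f' := G)
      (fun t _ => (hF t).hasDerivWithinAt)
      (fun t ht => by
        exact isMaxOn_iff.mp hmax t ht)
      (Set.left_mem_Icc.mpr hN.le) hr
    simpa [Real.norm_eq_abs, sub_zero, _root_.abs_of_nonneg hr.1] using key
  -- conclusion
  refine ⟨m^2 / (2*m^2 + 1 + 2*M^2), by positivity, ?_⟩
  intro r hr hrN x'
  have hrI : r ∈ Set.Icc (0:ℝ) N := ⟨hr.le, hrN⟩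
  have hv : m * r ≤ V' r := by rw [hVF]; exact hlow r hrI
  have hv2 : (m*r)^2 ≤ (V' r)^2 := by
    have h0 : 0 ≤ m * r := by positivity
    nlinarith
  have hure : (F r - F 0).re = U' r + ρ := by
    rw [Complex.sub_re, hF0re, hUF]; ring
  have hu : |U' r + ρ| ≤ M * r := by
    rw [← hure]
    exact le_trans (Complex.abs_re_le_norm _) (hup r hrI)
  have hu2 : (U' r + ρ)^2 ≤ (M*r)^2 := by
    have := abs_le.mp hu
    nlinarith
  have hK : (0:ℝ) < 2*m^2 + 1 + 2*M^2 := by positivity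
  rw [ge_iff_le, div_mul_eq_mul_div, div_le_iff₀ hK]
  nlinarith [hv2, hu2, sq_nonneg (x' - U' r), sq_nonneg (V' r),
    sq_nonneg (m * ((x' - U' r) - (U' r + ρ))),
    mul_le_mul_of_nonneg_left hv2 (sq_nonneg M),
    mul_le_mul_of_nonneg_left hu2 (sq_nonneg m),
    sq_nonneg (M * (x' - U' r)), sq_nonneg (M * V' r), sq_nonneg (m * V' r)]
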